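/- For every positive integer n and real (or complex) t not equal to 0, -1, ..., -n, the partial fraction expansion ((t-1)(t-2)···(t-n))/(t(t+1)···(t+n)) = Σ_{k=0}^{n} (-1)^{n-k} · C(n+k,n) · C(n,k) / (t+k) holds. -/
import Mathlib

open Finset Polynomial

private lemma aux1 (m n : ℕ) :
    (∏ j ∈ Finset.Icc 1 n, ((m : ℝ) + j)) * m.factorial = (m + n).factorial := by
  induction n with
  | zero => simp
  | succ n ih =>
      rw [Finset.prod_Icc_succ_top (by omega),
        show m + (n + 1) = (m + n) + 1 by ring, Nat.factorial_succ]
      push_cast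
      nlinarith [ih]

private lemma aux2 (m : ℕ) : ∏ j ∈ Finset.range m, ((m : ℝ) - j) = m.factorial := by
  induction m with
  | zero => simp
  | succ m ih =>
      have h : ∀ j ∈ Finset.range m, ((m + 1 : ℕ) : ℝ) - ((j + 1 : ℕ) : ℝ) = (m : ℝ) - (j : ℝ) := by
        intro j _; push_cast; ring
      rw [Finset.prod_range_succ', Finset.prod_congr rfl h, ih, Nat.factorial_succ]
      push_cast
      ring

private lemma aux3 (m n : ℕ) (h : m ≤ n) :
    ∏ j ∈ Finset.Icc (m + 1) n, ((j : ℝ) - m) = (n - m).factorial := by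
  induction n, h using Nat.le_induction with
  | base => simp
  | succ n hmn ih =>
      rw [Finset.prod_Icc_succ_top (by omega), ih,
        show n + 1 - m = (n - m) + 1 from by omega, Nat.factorial_succ]
      push_cast [Nat.cast_sub hmn]
      ring

private lemma aux4 (m n : ℕ) (h : m ≤ n) :
    (n + m).choose n * n.choose m * m.factorial * (n - m).factorial * m.factorial
      = (n + m).factorial := by
  have h1 : n.choose m * m.factorial * (n - m).factorial = n.factorial :=
    Nat.choose_mul_factorial_mul_factorial h
  have h2 : (n + m).choose n * n.factorial * m.factorial = (n + m).factorial := by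
    have := Nat.choose_mul_factorial_mul_factorial (Nat.le_add_right n m)
    simpa using this
  calc (n + m).choose n * n.choose m * m.factorial * (n - m).factorial * m.factorial
      = (n + m).choose n * (n.choose m * m.factorial * (n - m).factorial) * m.factorial := by ring
    _ = (n + m).choose n * n.factorial * m.factorial := by rw [h1]
    _ = (n + m).factorial := h2

/-- The key evaluation identity at `t = -m`. -/
private lemma eval_key (n m : ℕ) (h : m ≤ n) :
    ∏ j ∈ Finset.Icc 1 n, (-(m : ℝ) - j) =
      (-1 : ℝ) ^ (n - m) * ((n + m).choose n) * (n.choose m) *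
        ∏ j ∈ (Finset.range (n + 1)).erase m, ((j : ℝ) - m) := by
  have hL : ∏ j ∈ Finset.Icc 1 n, (-(m : ℝ) - j)
      = (-1 : ℝ) ^ n * ∏ j ∈ Finset.Icc 1 n, ((m : ℝ) + j) := by
    rw [show ((-1 : ℝ) ^ n) = ∏ _j ∈ Finset.Icc 1 n, (-1 : ℝ) by
      rw [Finset.prod_const, Nat.card_Icc]; norm_num]
    rw [← Finset.prod_mul_distrib]
    exact Finset.prod_congr rfl (by intro j _; ring)
  have hset : (Finset.range (n + 1)).erase m = Finset.range m ∪ Finset.Icc (m + 1) n := by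
    ext j
    simp only [Finset.mem_erase, Finset.mem_range, Finset.mem_union, Finset.mem_Icc]
    omega
  have hdisj : Disjoint (Finset.range m) (Finset.Icc (m + 1) n) := by
    simp only [Finset.disjoint_left, Finset.mem_range, Finset.mem_Icc]
    omega
  have hR1 : ∏ j ∈ Finset.range m, ((j : ℝ) - m)
      = (-1 : ℝ) ^ m * m.factorial := by
    rw [show ((-1 : ℝ) ^ m) = ∏ _j ∈ Finset.range m, (-1 : ℝ) by
      rw [Finset.prod_const, Finset.card_range]]
    rw [← aux2 m, ← Finset.prod_mul_distrib]
    exact Finset.prod_congr rfl (by intro j _; ring)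
  have hprod : ∏ j ∈ (Finset.range (n + 1)).erase m, ((j : ℝ) - m)
      = (-1 : ℝ) ^ m * m.factorial * (n - m).factorial := by
    rw [hset, Finset.prod_union hdisj, hR1, aux3 m n h]
  have hm : (m.factorial : ℝ) ≠ 0 := by positivity
  have hA : ∏ j ∈ Finset.Icc 1 n, ((m : ℝ) + j) = ((n + m).factorial : ℝ) / m.factorial := by
    rw [eq_div_iff hm, Nat.add_comm n m]
    exact_mod_cast aux1 m n
  have hsign : (-1 : ℝ) ^ (n - m) * (-1 : ℝ) ^ m = (-1 : ℝ) ^ n := by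
    rw [← pow_add, Nat.sub_add_cancel h]
  have hnat : (((n + m).choose n : ℝ)) * (n.choose m) * m.factorial * (n - m).factorial
      * m.factorial = ((n + m).factorial : ℝ) := by exact_mod_cast aux4 m n h
  rw [hL, hprod, hA, mul_div_assoc', div_eq_iff hm, ← hnat, ← hsign]
  ring

theorem partial_fraction_expansion (n : ℕ) (hn : 0 < n) (t : ℝ)
    (ht : ∀ k : ℕ, k ≤ n → t + k ≠ 0) :
    (∏ j ∈ Finset.Icc 1 n, (t - j)) / (∏ j ∈ Finset.range (n + 1), (t + j)) =
      ∑ k ∈ Finset.range (n + 1),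
        (-1 : ℝ) ^ (n - k) * ((n + k).choose n) * (n.choose k) / (t + k) := by
  classical
  set c : ℕ → ℝ := fun k => (-1 : ℝ) ^ (n - k) * ((n + k).choose n) * (n.choose k) with hc
  set P : ℝ[X] := ∏ j ∈ Finset.Icc 1 n, (X - C (j : ℝ)) with hP
  set Q : ℝ[X] := ∑ k ∈ Finset.range (n + 1),
      C (c k) * ∏ j ∈ (Finset.range (n + 1)).erase k, (X + C (j : ℝ)) with hQ
  have hPQ : P = Q := by
    apply Polynomial.eq_of_degrees_lt_of_eval_index_eq (v := fun m : ℕ => -(m : ℝ))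
      (Finset.range (n + 1))
    · intro a _ b _ hab
      exact Nat.cast_injective (neg_injective hab)
    · rw [Finset.card_range]
      have hPdeg : P.degree ≤ (n : WithBot ℕ) := by
        rw [hP]
        refine le_trans (Polynomial.degree_prod_le _ _) ?_
        refine le_trans (Finset.sum_le_sum fun j _ =>
          le_of_eq (Polynomial.degree_X_sub_C (j : ℝ))) ?_
        rw [Finset.sum_const, Nat.card_Icc]
        simp
      exact lt_of_le_of_lt hPdeg (by exact_mod_cast Nat.lt_succ_self n)
    · rw [Finset.card_range]
      have hQdeg : Q.degree ≤ (n : WithBot ℕ) := by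
        rw [hQ]
        refine le_trans (Polynomial.degree_sum_le _ _) (Finset.sup_le fun k hk => ?_)
        refine le_trans (Polynomial.degree_mul_le _ _) ?_
        have h2 : (∏ j ∈ (Finset.range (n + 1)).erase k, (X + C (j : ℝ))).degree
            ≤ (n : WithBot ℕ) := by
          refine le_trans (Polynomial.degree_prod_le _ _) ?_
          refine le_trans (Finset.sum_le_sum fun j _ =>
            le_of_eq (Polynomial.degree_X_add_C (j : ℝ))) ?_
          rw [Finset.sum_const, Finset.card_erase_of_mem hk, Finset.card_range]
          simp
        calc (C (c k)).degree + (∏ j ∈ (Finset.range (n + 1)).erase k, (X + C (j : ℝ))).degree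
            ≤ 0 + (n : WithBot ℕ) := add_le_add Polynomial.degree_C_le h2
          _ = (n : WithBot ℕ) := by simp
      exact lt_of_le_of_lt hQdeg (by exact_mod_cast Nat.lt_succ_self n)
    · intro m hm
      rw [Finset.mem_range] at hm
      have hmn : m ≤ n := by omega
      rw [hP, hQ]
      simp only [Polynomial.eval_prod, Polynomial.eval_finset_sum, Polynomial.eval_mul,
        Polynomial.eval_sub, Polynomial.eval_add, Polynomial.eval_X, Polynomial.eval_C]
      rw [Finset.sum_eq_single m]
      · rw [eval_key n m hmn]
        simp only [hc]
        rw [show ((-1 : ℝ) ^ (n - m) * ((n + m).choose n) * (n.choose m)) *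
            ∏ j ∈ (Finset.range (n + 1)).erase m, ((j : ℝ) - m)
          = ((-1 : ℝ) ^ (n - m) * ((n + m).choose n) * (n.choose m)) *
            ∏ j ∈ (Finset.range (n + 1)).erase m, (-(m : ℝ) + j) from by
          congr 1
          exact Finset.prod_congr rfl (by intro j _; ring)]
      · intro k _ hkm
        have hmem : m ∈ (Finset.range (n + 1)).erase k :=
          Finset.mem_erase.mpr ⟨hkm.symm, Finset.mem_range.mpr hm⟩
        have hz : ∏ j ∈ (Finset.range (n + 1)).erase k, (-(m : ℝ) + (j : ℝ)) = 0 :=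
          Finset.prod_eq_zero hmem (by ring)
        rw [hz, mul_zero]
      · intro habs
        exact absurd (Finset.mem_range.mpr hm) habs
  have hD : ∀ j ∈ Finset.range (n + 1), t + (j : ℝ) ≠ 0 := by
    intro j hj
    exact ht j (Nat.lt_succ_iff.mp (Finset.mem_range.mp hj))
  have hevalP : P.eval t = ∏ j ∈ Finset.Icc 1 n, (t - j) := by
    rw [hP]; simp [Polynomial.eval_prod]
  have hevalQ : Q.eval t = ∑ k ∈ Finset.range (n + 1),
      c k * ∏ j ∈ (Finset.range (n + 1)).erase k, (t + j) := by
    rw [hQ]; simp [Polynomial.eval_finset_sum, Polynomial.eval_prod]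
  have hkey : ∏ j ∈ Finset.Icc 1 n, (t - j) = ∑ k ∈ Finset.range (n + 1),
      c k * ∏ j ∈ (Finset.range (n + 1)).erase k, (t + j) := by
    rw [← hevalP, ← hevalQ, hPQ]
  rw [hkey, Finset.sum_div]
  apply Finset.sum_congr rfl
  intro k hk
  have hsplit : ∏ j ∈ Finset.range (n + 1), (t + (j : ℝ))
      = (t + k) * ∏ j ∈ (Finset.range (n + 1)).erase k, (t + j) :=
    (Finset.mul_prod_erase _ _ hk).symm
  have hne : ∏ j ∈ (Finset.range (n + 1)).erase k, (t + (j : ℝ)) ≠ 0 :=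
    Finset.prod_ne_zero_iff.mpr fun j hj => hD j (Finset.mem_of_mem_erase hj)
  rw [hsplit]
  rw [mul_comm (t + (k : ℝ)), mul_comm (c k)]
  exact mul_div_mul_left _ _ hne
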